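/- Let m ∈ ℂ with |m| < 1 and let P₊, P₋, Q₊, Q₋ ∈ ℂ with conj(P_±) = Q_± (representing F_±^*(ν_±) and F_±^*(conj ν_±)). Define δΦ = (1/2)e^φ[(P₊ - P₋)conj(m)² + (Q₊ - Q₋)] and δμ = (1/2)(1+|m|²)⁻¹[(P₊ + P₋) + (Q₊ + Q₋)m²], with e^φ > 0 real. Then, antisymmetrizing in two such deformation vectors (P_±, Q_±) and (P'_±, Q'_±): i·(δΦ ∧ δμ - conj(δΦ) ∧ conj(δμ)) = -(i/2)(1-|m|²)e^φ·(P₊ ∧ Q'₊ - P₋ ∧ Q'₋), where X ∧ Y' := X·Y' - X'·Y. -/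

import Mathlib

open Complex

/-- Pointwise identity underlying Proposition 4.7: the canonical symplectic
pairing expressed via δΦ and δμ reduces to the difference of the
Weil–Petersson pairings. Here Q_± = conj(P_±), Q'_± = conj(P'_±), and
X ∧ Y' denotes the antisymmetrization X·Y' - X'·Y. -/
theorem canonical_symplectic_pairing
    (m : ℂ) (hm : ‖m‖ < 1) (eφ : ℝ) (heφ : 0 < eφ)
    (Pp Pm Pp' Pm' : ℂ)
    (Qp Qm Qp' Qm' : ℂ)
    (hQp : Qp = (starRingEnd ℂ) Pp) (hQm : Qm = (starRingEnd ℂ) Pm)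
    (hQp' : Qp' = (starRingEnd ℂ) Pp') (hQm' : Qm' = (starRingEnd ℂ) Pm')
    (δΦ δμ δΦ' δμ' : ℂ)
    (hδΦ : δΦ = (1 / 2) * (eφ : ℂ)
        * ((Pp - Pm) * ((starRingEnd ℂ) m) ^ 2 + (Qp - Qm)))
    (hδμ : δμ = (1 / 2) * (1 + (‖m‖ : ℂ) ^ 2)⁻¹
        * ((Pp + Pm) + (Qp + Qm) * m ^ 2))
    (hδΦ' : δΦ' = (1 / 2) * (eφ : ℂ)
        * ((Pp' - Pm') * ((starRingEnd ℂ) m) ^ 2 + (Qp' - Qm')))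
    (hδμ' : δμ' = (1 / 2) * (1 + (‖m‖ : ℂ) ^ 2)⁻¹
        * ((Pp' + Pm') + (Qp' + Qm') * m ^ 2)) :
    Complex.I * ((δΦ * δμ' - δΦ' * δμ)
        - ((starRingEnd ℂ) δΦ * (starRingEnd ℂ) δμ'
          - (starRingEnd ℂ) δΦ' * (starRingEnd ℂ) δμ))
    = -(Complex.I / 2) * (1 - (‖m‖ : ℂ) ^ 2) * (eφ : ℂ)
        * ((Pp * Qp' - Pp' * Qp) - (Pm * Qm' - Pm' * Qm)) := by
  have habs : ((‖m‖ : ℂ)) ^ 2 = m * (starRingEnd ℂ) m := by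
    rw [Complex.mul_conj]
    norm_cast
    exact Complex.sq_norm m
  have hden : (1 : ℂ) + m * (starRingEnd ℂ) m ≠ 0 := by
    rw [← habs]
    intro hc
    have h2 : (1:ℝ) + ‖m‖ ^ 2 = 0 := by exact_mod_cast hc
    nlinarith [norm_nonneg m]
  subst hQp hQm hQp' hQm' hδΦ hδμ hδΦ' hδμ'
  simp only [map_mul, map_add, map_sub, map_inv₀, map_pow, map_one, map_ofNat,
    Complex.conj_conj, Complex.conj_ofReal, map_div₀]
  rw [habs]
  have hden' : (1 : ℂ) + (starRingEnd ℂ) m * m ≠ 0 := by rwa [mul_comm]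
  field_simp
  ring
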